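/- Let E (cells) and K (commodities) be finite types, let R : E → E → K → ℝ with R i j k ≥ 0 be turning ratios, let D : E → K → ℝ with D i k ≥ 0 be the (controlled) demand values of each commodity in each cell, and let s : E → ℝ with s j ≥ 0 be the supply values. For each i ∈ E define the FIFO coefficient γ i = sSup { γ ∈ ℝ : 0 ≤ γ ∧ γ ≤ 1 ∧ ∀ j ∈ E, (∃ k ∈ K, R i j k > 0) → γ · (Σ_{k ∈ K} Σ_{h ∈ E} R h j k · D h k) ≤ s j }, and define the flows f i j k = γ i · R i j k · D i k. Then the total inflow to every cell respects its supply: for every j ∈ E, Σ_{k ∈ K} Σ_{i ∈ E} f i j k ≤ s j. -/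

import Mathlib

/-- Under the FIFO allocation rule, the flows `f i j k = γ i * R i j k * D i k`,
where `γ i` is the largest `γ ∈ [0,1]` such that `γ` times the aggregate demand
directed to every downstream cell `j` of `i` does not exceed the supply `s j`,
respect the supply of every cell: `∑ k ∑ i, f i j k ≤ s j`. -/
theorem fifo_flows_respect_supply
    (E K : Type*) [Fintype E] [Fintype K]
    (R : E → E → K → ℝ) (hR : ∀ i j k, 0 ≤ R i j k)
    (D : E → K → ℝ) (hD : ∀ i k, 0 ≤ D i k)
    (s : E → ℝ) (hs : ∀ j, 0 ≤ s j)
    (γ : E → ℝ)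
    (hγ : ∀ i, γ i = sSup {g : ℝ | 0 ≤ g ∧ g ≤ 1 ∧ ∀ j, (∃ k, 0 < R i j k) →
      g * (∑ k, ∑ h, R h j k * D h k) ≤ s j})
    (f : E → E → K → ℝ)
    (hf : ∀ i j k, f i j k = γ i * (R i j k * D i k)) :
    ∀ j, (∑ k, ∑ i, f i j k) ≤ s j := by
  intro j
  set T : ℝ := ∑ k, ∑ h, R h j k * D h k with hTdef
  have hterm : ∀ h k, 0 ≤ R h j k * D h k := fun h k => mul_nonneg (hR h j k) (hD h k)
  have hT0 : 0 ≤ T := Finset.sum_nonneg fun k _ => Finset.sum_nonneg fun h _ => hterm h k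
  set a : E → ℝ := fun i => ∑ k, R i j k * D i k with hadef
  have ha0 : ∀ i, 0 ≤ a i := fun i => Finset.sum_nonneg fun k _ => hterm i k
  have hTa : T = ∑ i, a i := Finset.sum_comm
  have hsum : (∑ k, ∑ i, f i j k) = ∑ i, γ i * a i := by
    rw [Finset.sum_comm]
    refine Finset.sum_congr rfl fun i _ => ?_
    simp only [hf, ← Finset.mul_sum]
    rfl
  rw [hsum]
  rcases eq_or_lt_of_le hT0 with hT | hT
  · -- T = 0, so every a i = 0
    have hzero : ∀ i ∈ Finset.univ, a i = 0 := by
      have := (Finset.sum_eq_zero_iff_of_nonneg (fun i _ => ha0 i)).mp (hTa ▸ hT.symm)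
      exact this
    have : (∑ i, γ i * a i) = 0 := Finset.sum_eq_zero fun i hi => by
      rw [hzero i hi, mul_zero]
    rw [this]; exact hs j
  · -- T > 0
    have key : ∀ i, γ i * a i ≤ (s j / T) * a i := by
      intro i
      rcases eq_or_lt_of_le (ha0 i) with hai | hai
      · rw [← hai, mul_zero, mul_zero]
      · -- a i > 0, so there is k with R i j k > 0
        have hex : ∃ k, 0 < R i j k := by
          by_contra hcon
          push_neg at hcon
          have : a i = 0 := Finset.sum_eq_zero fun k _ => by
            have : R i j k = 0 := le_antisymm (hcon k) (hR i j k)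
            rw [this, zero_mul]
          exact absurd this (ne_of_gt hai)
        have hγle : γ i ≤ s j / T := by
          rw [hγ i]
          apply Real.sSup_le
          · rintro g ⟨-, -, hg⟩
            have := hg j hex
            rw [le_div_iff₀ hT]
            linarith
          · exact div_nonneg (hs j) hT0
        exact mul_le_mul_of_nonneg_right hγle (le_of_lt hai)
    calc (∑ i, γ i * a i) ≤ ∑ i, (s j / T) * a i := Finset.sum_le_sum fun i _ => key i
      _ = (s j / T) * T := by rw [← Finset.mul_sum, ← hTa]
      _ = s j := div_mul_cancel₀ _ (ne_of_gt hT)
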